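/- Let t be a positive integer and let H = ⟨a, b | a^(3^(t+1)) = b^(3^(t+1)) = 1, b^(-1)ab = a^(1+3^t)⟩. Then the map sending a to a^(-1) and b to a^(-1)b extends to an automorphism of H. -/

import Mathlib

/-- Relations for the group `⟨a, b | a^(3^(t+1)) = b^(3^(t+1)) = 1, b⁻¹ab = a^(1+3^t)⟩`,
with generator `0` playing the role of `a` and `1` the role of `b`. -/
def hRels (t : ℕ) : Set (FreeGroup (Fin 2)) :=
  { FreeGroup.of 0 ^ 3 ^ (t + 1), FreeGroup.of 1 ^ 3 ^ (t + 1),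
    (FreeGroup.of 1)⁻¹ * FreeGroup.of 0 * FreeGroup.of 1 *
      (FreeGroup.of 0 ^ (1 + 3 ^ t))⁻¹ }

section Aux

open Finset

variable {G : Type*} [Group G]

/-- In any group with the relations of `H`, the element `a⁻¹b` has order dividing `3^(t+1)`. -/
theorem aux_key (t : ℕ) (ht : 0 < t) (A B : G)
    (hA : A ^ 3 ^ (t + 1) = 1) (hB : B ^ 3 ^ (t + 1) = 1)
    (hC : B⁻¹ * A * B = A ^ (1 + 3 ^ t)) :
    (A⁻¹ * B) ^ 3 ^ (t + 1) = 1 := by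
  set c : G := A ^ 3 ^ t with hc
  have hc3 : c ^ 3 = 1 := by
    rw [hc, ← pow_mul, ← pow_succ]; exact hA
  have hAc : Commute A c := (Commute.refl A).pow_right _
  -- c is centralized by B
  have hconj : ∀ n : ℕ, B⁻¹ * A ^ n * B = (B⁻¹ * A * B) ^ n := by
    intro n
    have : B⁻¹ * A * B = B⁻¹ * A * B⁻¹⁻¹ := by rw [inv_inv]
    rw [this, conj_pow, inv_inv]
  have hcB' : B⁻¹ * c * B = c := by
    rw [hc, hconj, hC, ← pow_mul]
    have h1 : (1 + 3 ^ t) * 3 ^ t = 3 ^ t + 3 ^ (t + 1) * 3 ^ (t - 1) := by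
      have h : t + 1 + (t - 1) = t + t := by omega
      rw [add_mul, one_mul, ← pow_add, ← pow_add, h]
    rw [h1, pow_add, pow_mul, hA, one_pow, mul_one]
  have hBc : Commute B c := by
    have : B * (B⁻¹ * c * B) = B * c := by rw [hcB']
    rw [← mul_assoc, ← mul_assoc, mul_inv_cancel, one_mul] at this
    exact this.symm
  have hABc : A * B = B * A * c := by
    have : B * (B⁻¹ * A * B) = B * A ^ (1 + 3 ^ t) := by rw [hC]
    rw [← mul_assoc, ← mul_assoc, mul_inv_cancel, one_mul] at this
    rw [this, pow_add, pow_one, ← hc, mul_assoc]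
  have hAcA : A * c * A⁻¹ = c := by rw [hAc.eq, mul_assoc, mul_inv_cancel, mul_one]
  have hBAinv : B * A⁻¹ = A⁻¹ * B * c :=
    calc B * A⁻¹ = A⁻¹ * (A * B) * A⁻¹ := by group
      _ = A⁻¹ * (B * A * c) * A⁻¹ := by rw [hABc]
      _ = A⁻¹ * B * (A * c * A⁻¹) := by group
      _ = A⁻¹ * B * c := by rw [hAcA]
  have hBnAinv : ∀ n : ℕ, B ^ n * A⁻¹ = A⁻¹ * B ^ n * c ^ n := by
    intro n
    induction n with
    | zero => simp
    | succ n ih =>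
      calc B ^ (n + 1) * A⁻¹ = B ^ n * (B * A⁻¹) := by rw [pow_succ, mul_assoc]
        _ = B ^ n * (A⁻¹ * B * c) := by rw [hBAinv]
        _ = (B ^ n * A⁻¹) * B * c := by group
        _ = A⁻¹ * B ^ n * c ^ n * B * c := by rw [ih]
        _ = A⁻¹ * B ^ n * B * c ^ n * c := by
            rw [mul_assoc (A⁻¹ * B ^ n), ((hBc.symm).pow_left n).eq,
              ← mul_assoc]
        _ = A⁻¹ * B ^ (n + 1) * c ^ (n + 1) := by
            rw [mul_assoc (A⁻¹ * B ^ n * B), ← pow_succ, mul_assoc A⁻¹ (B ^ n) B, ← pow_succ]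
  have main : ∀ n : ℕ, (A⁻¹ * B) ^ n = A⁻¹ ^ n * B ^ n * c ^ (∑ i ∈ range n, i) := by
    intro n
    induction n with
    | zero => simp
    | succ n ih =>
      have hAinvc : Commute A⁻¹ (c ^ (∑ i ∈ range n, i)) := (hAc.inv_left).pow_right _
      calc (A⁻¹ * B) ^ (n + 1) = (A⁻¹ * B) ^ n * (A⁻¹ * B) := pow_succ _ _
        _ = A⁻¹ ^ n * B ^ n * c ^ (∑ i ∈ range n, i) * (A⁻¹ * B) := by rw [ih]
        _ = A⁻¹ ^ n * B ^ n * (c ^ (∑ i ∈ range n, i) * A⁻¹) * B := by group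
        _ = A⁻¹ ^ n * (B ^ n * A⁻¹) * c ^ (∑ i ∈ range n, i) * B := by
            rw [hAinvc.symm.eq]; group
        _ = A⁻¹ ^ n * (A⁻¹ * B ^ n * c ^ n) * c ^ (∑ i ∈ range n, i) * B := by rw [hBnAinv]
        _ = A⁻¹ ^ (n + 1) * B ^ n * (c ^ (n + ∑ i ∈ range n, i) * B) := by
            rw [pow_succ, pow_add]; group
        _ = A⁻¹ ^ (n + 1) * B ^ n * (B * c ^ (n + ∑ i ∈ range n, i)) := by
            rw [(hBc.pow_right _).eq]
        _ = A⁻¹ ^ (n + 1) * B ^ (n + 1) * c ^ (∑ i ∈ range (n + 1), i) := by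
            rw [Finset.sum_range_succ, Nat.add_comm (∑ i ∈ range n, i) n, pow_succ]; group
  have h3 : (3 : ℕ) ∣ ∑ i ∈ range (3 ^ (t + 1)), i := by
    have h2 : (∑ i ∈ range (3 ^ (t + 1)), i) * 2 = 3 ^ (t + 1) * (3 ^ (t + 1) - 1) :=
      Finset.sum_range_id_mul_two _
    have h3d : (3 : ℕ) ∣ (∑ i ∈ range (3 ^ (t + 1)), i) * 2 := by
      rw [h2]
      exact Dvd.dvd.mul_right (dvd_pow_self 3 (Nat.succ_ne_zero t)) _
    exact (Nat.Coprime.dvd_of_dvd_mul_right (by norm_num) h3d)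
  obtain ⟨k, hk⟩ := h3
  rw [main, hk, pow_mul, hc3, one_pow, mul_one, inv_pow, hA, hB, inv_one, one_mul]

end Aux

theorem stmt_11 (t : ℕ) (ht : 0 < t) :
    ∃ φ : PresentedGroup (hRels t) ≃* PresentedGroup (hRels t),
      φ (PresentedGroup.of 0) = (PresentedGroup.of 0 : PresentedGroup (hRels t))⁻¹ ∧
      φ (PresentedGroup.of 1) =
        (PresentedGroup.of 0 : PresentedGroup (hRels t))⁻¹ * PresentedGroup.of 1 := by
  set A : PresentedGroup (hRels t) := PresentedGroup.of 0 with hAdef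
  set B : PresentedGroup (hRels t) := PresentedGroup.of 1 with hBdef
  have hrel : ∀ r ∈ hRels t, PresentedGroup.mk (hRels t) r = 1 := fun r hr =>
    (QuotientGroup.eq_one_iff r).2 (Subgroup.subset_normalClosure hr)
  have hA : A ^ 3 ^ (t + 1) = 1 := by
    have := hrel _ (Set.mem_insert _ _)
    rwa [map_pow] at this
  have hB : B ^ 3 ^ (t + 1) = 1 := by
    have := hrel (FreeGroup.of 1 ^ 3 ^ (t + 1))
      (Set.mem_insert_of_mem _ (Set.mem_insert _ _))
    rwa [map_pow] at this
  have hC : B⁻¹ * A * B = A ^ (1 + 3 ^ t) := by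
    have := hrel ((FreeGroup.of 1)⁻¹ * FreeGroup.of 0 * FreeGroup.of 1 *
        (FreeGroup.of 0 ^ (1 + 3 ^ t))⁻¹)
      (Set.mem_insert_of_mem _ (Set.mem_insert_of_mem _ rfl))
    rw [map_mul, map_mul, map_mul, map_inv, map_inv, map_pow] at this
    have h := mul_eq_one_iff_eq_inv.1 this
    rwa [inv_inv] at h
  set F : Fin 2 → PresentedGroup (hRels t) := ![A⁻¹, A⁻¹ * B] with hF
  have hrels : ∀ r ∈ hRels t, FreeGroup.lift F r = 1 := by
    intro r hr
    simp only [hRels, Set.mem_insert_iff, Set.mem_singleton_iff] at hr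
    rcases hr with rfl | rfl | rfl
    · rw [map_pow, FreeGroup.lift_apply_of]
      show (F 0) ^ 3 ^ (t + 1) = 1
      rw [hF]
      simp only [Matrix.cons_val_zero]
      rw [inv_pow, hA, inv_one]
    · rw [map_pow, FreeGroup.lift_apply_of]
      show (F 1) ^ 3 ^ (t + 1) = 1
      rw [hF]
      simp only [Matrix.cons_val_one, Matrix.head_cons]
      exact aux_key t ht A B hA hB hC
    · simp only [map_mul, map_inv, map_pow, FreeGroup.lift_apply_of]
      show (F 1)⁻¹ * F 0 * F 1 * ((F 0) ^ (1 + 3 ^ t))⁻¹ = 1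
      rw [hF]
      simp only [Matrix.cons_val_zero, Matrix.cons_val_one, Matrix.head_cons]
      rw [inv_pow, ← hC]
      group
  set φ0 : PresentedGroup (hRels t) →* PresentedGroup (hRels t) :=
    PresentedGroup.toGroup hrels with hφ0
  have hφA : φ0 A = A⁻¹ := by
    rw [hφ0, hAdef]
    rw [PresentedGroup.toGroup.of]
    simp [hF]
    exact hAdef
  have hφB : φ0 B = A⁻¹ * B := by
    rw [hφ0, hBdef]
    rw [PresentedGroup.toGroup.of]
    simp [hF]
    exact hBdef
  have hinv : ∀ x, φ0 (φ0 x) = x := by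
    have hcomp : φ0.comp φ0 = MonoidHom.id _ := by
      apply PresentedGroup.ext
      intro x
      fin_cases x
      · show φ0 (φ0 A) = A
        rw [hφA, map_inv, hφA, inv_inv]
      · show φ0 (φ0 B) = B
        rw [hφB, map_mul, map_inv, hφA, hφB, inv_inv, ← mul_assoc,
          mul_inv_cancel, one_mul]
    intro x
    exact DFunLike.congr_fun hcomp x
  refine ⟨{ toFun := φ0, invFun := φ0, left_inv := hinv, right_inv := hinv,
            map_mul' := map_mul φ0 }, ?_, ?_⟩
  · exact hφA
  · exact hφB
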